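/- The kernel of the reduction map GL_n(Z_p) → GL_n(Z/p^k Z) is torsion-free for p odd and k ≥ 1 (and for p = 2, k ≥ 2). -/

import Mathlib

open Finset

/-- Binomial expansion of `(A+1)^q` with `ℕ`-smul coefficients, in any ring. -/
lemma kr_expand {R : Type*} [Ring R] (A : R) (q : ℕ) :
    (A + 1) ^ q = ∑ m ∈ range (q + 1), q.choose m • A ^ m := by
  rw [(Commute.one_right A).add_pow]
  refine Finset.sum_congr rfl fun m _ => ?_
  rw [one_pow, mul_one, nsmul_eq_mul, (Nat.cast_commute (q.choose m) (A ^ m)).eq]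

/-- Entrywise norm bound for matrix powers over `ℤ_[p]`. -/
lemma kr_pow_bound {p : ℕ} [Fact p.Prime] {n : ℕ}
    (A : Matrix (Fin n) (Fin n) ℤ_[p]) {r : ℝ} (hr : 0 ≤ r)
    (hA : ∀ a b, ‖A a b‖ ≤ r) :
    ∀ m : ℕ, ∀ a b, ‖(A ^ (m + 1)) a b‖ ≤ r ^ (m + 1) := by
  intro m
  induction m with
  | zero => intro a b; simpa using hA a b
  | succ m ih =>
    intro a b
    rw [pow_succ, Matrix.mul_apply]
    refine IsUltrametricDist.norm_sum_le_of_forall_le_of_nonneg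
      (pow_nonneg hr _) fun c _ => ?_
    rw [norm_mul, pow_succ]
    exact mul_le_mul (ih a c) (hA c b) (norm_nonneg _) (pow_nonneg hr _)

/-- Key lemma: if all entries of `A` have norm `≤ p^{-k}` (with the stated condition on
`p`, `k`), `q` is prime and `(A+1)^q = 1`, then `A = 0`. -/
lemma kr_key (p : ℕ) [hp : Fact p.Prime] (n k : ℕ)
    (hk : (p ≠ 2 ∧ 1 ≤ k) ∨ (p = 2 ∧ 2 ≤ k))
    (q : ℕ) (hq : q.Prime)
    (A : Matrix (Fin n) (Fin n) ℤ_[p])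
    (hA : ∀ a b, ‖A a b‖ ≤ (p : ℝ) ^ (-(k : ℤ)))
    (hpow : (A + 1) ^ q = 1) : A = 0 := by
  by_contra hA0
  obtain ⟨a0, b0, h0⟩ : ∃ a b, A a b ≠ 0 := by
    by_contra h
    push_neg at h
    exact hA0 (Matrix.ext fun a b => by simpa using h a b)
  -- pick an entry of maximal norm
  obtain ⟨⟨a, b⟩, -, hmax⟩ := Finset.exists_max_image Finset.univ
    (fun x : Fin n × Fin n => ‖A x.1 x.2‖) ⟨(a0, b0), Finset.mem_univ _⟩
  set r : ℝ := ‖A a b‖ with hr_def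
  have hmax' : ∀ c d, ‖A c d‖ ≤ r := fun c d => hmax (c, d) (Finset.mem_univ _)
  have hr_pos : 0 < r := lt_of_lt_of_le (norm_pos_iff.mpr h0) (hmax' a0 b0)
  have hrk : r ≤ (p : ℝ) ^ (-(k : ℤ)) := hA a b
  have hp1 : (1 : ℝ) < p := by exact_mod_cast hp.out.one_lt
  have hk1 : 1 ≤ k := by rcases hk with ⟨-, h⟩ | ⟨-, h⟩ <;> omega
  have hppos : (0:ℝ) < p := lt_trans one_pos hp1
  have hpk1 : (p : ℝ) ^ (-(k : ℤ)) < 1 := by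
    rw [zpow_neg, zpow_natCast]
    exact inv_lt_one_of_one_lt₀ (one_lt_pow₀ hp1 (by omega))
  have hr1 : r < 1 := lt_of_le_of_lt hrk hpk1
  -- binomial expansion and rearrangement
  have hq2 : 2 ≤ q := hq.two_le
  have hexp := kr_expand A q
  rw [hpow] at hexp
  have hsplit : (Finset.range (q + 1)) = insert 0 (insert 1 (Finset.Icc 2 q)) := by
    ext m
    simp [Finset.mem_range, Finset.mem_Icc]
    omega
  rw [hsplit, Finset.sum_insert (by simp), Finset.sum_insert (by simp)] at hexp
  simp only [pow_zero, pow_one, smul_eq_mul, one_smul, Nat.choose_zero_right,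
    Nat.choose_one_right] at hexp
  -- `q • A = - ∑ ...`
  have hmain : q • A = - ∑ m ∈ Finset.Icc 2 q, q.choose m • A ^ m :=
    eq_neg_of_add_eq_zero_left (left_eq_add.mp hexp)
  -- entrywise at (a, b)
  have hEnt : (q : ℤ_[p]) * A a b
      = - ∑ m ∈ Finset.Icc 2 q, (q.choose m : ℤ_[p]) * (A ^ m) a b := by
    have h := congrArg (fun M => M a b) hmain
    simp only [Matrix.smul_apply, Matrix.sum_apply, Matrix.neg_apply] at h
    simpa [nsmul_eq_mul] using h
  -- power bound specialized
  have hpowb : ∀ m ∈ Finset.Icc 2 q, ‖(A ^ m) a b‖ ≤ r ^ m := by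
    intro m hm
    rw [Finset.mem_Icc] at hm
    obtain ⟨m', rfl⟩ : ∃ m', m = m' + 1 := ⟨m - 1, by omega⟩
    exact kr_pow_bound A hr_pos.le hmax' m' a b
  -- common bound t for the RHS terms, with t < ‖q‖ * r
  obtain ⟨t, hterm, htlt⟩ : ∃ t : ℝ,
      (∀ m ∈ Finset.Icc 2 q, ‖(q.choose m : ℤ_[p]) * (A ^ m) a b‖ ≤ t)
      ∧ t < ‖(q : ℤ_[p])‖ * r := by
    rcases eq_or_ne q p with rfl | hqp
    · -- q = p (the prime `p` has been renamed to `q` here)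
      refine ⟨(q : ℝ)⁻¹ * r ^ 2 ⊔ r ^ q, fun m hm => ?_, ?_⟩
      · rw [Finset.mem_Icc] at hm
        rw [norm_mul]
        rcases eq_or_lt_of_le hm.2 with rfl | hmp
        · refine le_sup_of_le_right ?_
          calc ‖((m.choose m : ℕ) : ℤ_[m])‖ * ‖(A ^ m) a b‖
              ≤ 1 * r ^ m := mul_le_mul (PadicInt.norm_le_one _)
                (hpowb m (by rw [Finset.mem_Icc]; omega)) (norm_nonneg _) zero_le_one
            _ = r ^ m := one_mul _
        · refine le_sup_of_le_left ?_
          have hdvd : q ∣ q.choose m := hq.dvd_choose_self (by omega) hmp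
          obtain ⟨c, hc⟩ := hdvd
          have hnc : ‖((q.choose m : ℕ) : ℤ_[q])‖ ≤ (q : ℝ)⁻¹ := by
            rw [hc]
            push_cast
            rw [norm_mul, PadicInt.norm_p]
            calc (q : ℝ)⁻¹ * ‖((c : ℕ) : ℤ_[q])‖ ≤ (q:ℝ)⁻¹ * 1 :=
                mul_le_mul_of_nonneg_left (PadicInt.norm_le_one _) (by positivity)
              _ = (q : ℝ)⁻¹ := mul_one _
          calc ‖((q.choose m : ℕ) : ℤ_[q])‖ * ‖(A ^ m) a b‖
              ≤ (q : ℝ)⁻¹ * r ^ m := mul_le_mul hnc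
                (hpowb m (by rw [Finset.mem_Icc]; omega)) (norm_nonneg _) (by positivity)
            _ ≤ (q : ℝ)⁻¹ * r ^ 2 := by
                refine mul_le_mul_of_nonneg_left ?_ (by positivity)
                exact pow_le_pow_of_le_one hr_pos.le hr1.le hm.1
      · rw [PadicInt.norm_p]
        refine sup_lt_iff.mpr ⟨?_, ?_⟩
        · refine mul_lt_mul_of_pos_left ?_ (by positivity)
          nlinarith
        · -- r ^ q < q⁻¹ * r, i.e. q * r ^ (q-1) < 1
          have hkp2 : 2 ≤ k * (q - 1) := by
            rcases hk with ⟨hne2, hk1'⟩ | ⟨h2, hk2⟩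
            · have h3 : 3 ≤ q := by
                rcases hq.two_le.lt_or_eq with h | h
                · omega
                · exact absurd h.symm hne2
              calc 2 ≤ 1 * 2 := by norm_num
                _ ≤ k * (q - 1) := Nat.mul_le_mul hk1' (by omega)
            · subst h2; omega
          have hrp1 : r ^ (q - 1) ≤ ((q : ℝ) ^ 2)⁻¹ := by
            calc r ^ (q - 1) ≤ ((q : ℝ) ^ (-(k:ℤ))) ^ (q - 1) :=
                pow_le_pow_left₀ hr_pos.le hrk _
              _ = ((q : ℝ) ^ (k * (q - 1)))⁻¹ := by
                  rw [zpow_neg, zpow_natCast, inv_pow, pow_mul]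
              _ ≤ ((q : ℝ) ^ 2)⁻¹ := by
                  refine inv_anti₀ (by positivity) ?_
                  exact pow_le_pow_right₀ hp1.le hkp2
          have hp2 : (q : ℝ) * ((q : ℝ) ^ 2)⁻¹ = (q : ℝ)⁻¹ := by
            field_simp
          have hlt1 : (q : ℝ) * r ^ (q - 1) < 1 := by
            calc (q : ℝ) * r ^ (q - 1) ≤ (q : ℝ) * ((q : ℝ) ^ 2)⁻¹ :=
                mul_le_mul_of_nonneg_left hrp1 hppos.le
              _ = (q : ℝ)⁻¹ := hp2
              _ < 1 := inv_lt_one_of_one_lt₀ hp1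
          have hps : r ^ q = r ^ (q - 1) * r := by
            rw [← pow_succ]
            congr 1
            omega
          rw [hps, inv_mul_eq_div, lt_div_iff₀ hppos]
          calc r ^ (q - 1) * r * q = ((q : ℝ) * r ^ (q - 1)) * r := by ring
            _ < 1 * r := mul_lt_mul_of_pos_right hlt1 hr_pos
            _ = r := one_mul r
    · -- q ≠ p : ‖q‖ = 1
      have hnq : ‖(q : ℤ_[p])‖ = 1 := by
        have hnd : ¬ ((p : ℤ) ∣ (q : ℤ)) := by
          rw [Int.natCast_dvd_natCast]
          intro hd
          exact hqp ((Nat.prime_dvd_prime_iff_eq hp.out hq).mp hd).symm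
        have h1 := (PadicInt.norm_int_lt_one_iff_dvd (q : ℤ)).not.mpr hnd
        push_cast at h1
        have hle := PadicInt.norm_le_one ((q : ℕ) : ℤ_[p])
        push_cast at hle
        linarith [lt_or_ge ‖((q : ℕ) : ℤ_[p])‖ 1]
      refine ⟨r ^ 2, fun m hm => ?_, ?_⟩
      · rw [Finset.mem_Icc] at hm
        rw [norm_mul]
        calc ‖((q.choose m : ℕ) : ℤ_[p])‖ * ‖(A ^ m) a b‖ ≤ 1 * r ^ m :=
            mul_le_mul (PadicInt.norm_le_one _) (hpowb m (by rw [Finset.mem_Icc]; omega))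
              (norm_nonneg _) zero_le_one
          _ = r ^ m := one_mul _
          _ ≤ r ^ 2 := pow_le_pow_of_le_one hr_pos.le hr1.le hm.1
      · rw [hnq, one_mul]
        nlinarith
  -- the contradiction
  have hRle : ‖(q : ℤ_[p])‖ * r ≤ t := by
    rw [← norm_mul, hEnt, norm_neg]
    exact IsUltrametricDist.norm_sum_le_of_forall_le_of_nonempty
      ⟨2, by rw [Finset.mem_Icc]; omega⟩ hterm
  linarith

theorem ker_reduction_torsionFree
    (p : ℕ) [Fact p.Prime] (n k : ℕ)
    (hk : (p ≠ 2 ∧ 1 ≤ k) ∨ (p = 2 ∧ 2 ≤ k))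
    (g : Matrix.GeneralLinearGroup (Fin n) ℤ_[p])
    (hg : g ∈ MonoidHom.ker
      (Units.map (RingHom.mapMatrix (PadicInt.toZModPow k) :
        Matrix (Fin n) (Fin n) ℤ_[p] →+* Matrix (Fin n) (Fin n) (ZMod (p ^ k))).toMonoidHom))
    (hfin : IsOfFinOrder g) :
    g = 1 := by
  by_contra hne
  have hm : orderOf g ≠ 0 := hfin.orderOf_pos.ne'
  have hm1 : orderOf g ≠ 1 := fun h => hne (orderOf_eq_one_iff.mp h)
  obtain ⟨q, hq, hqd⟩ := Nat.exists_prime_and_dvd hm1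
  set h := g ^ (orderOf g / q) with hh
  have horder : orderOf h = q := orderOf_pow_orderOf_div hm hqd
  have hh1 : h ≠ 1 := by
    intro e
    rw [e, orderOf_one] at horder
    exact hq.one_lt.ne' horder.symm
  have hhq : h ^ q = 1 := by rw [← horder]; exact pow_orderOf_eq_one h
  have hker : Units.map (RingHom.mapMatrix (PadicInt.toZModPow k) :
      Matrix (Fin n) (Fin n) ℤ_[p] →+* Matrix (Fin n) (Fin n) (ZMod (p ^ k))).toMonoidHom h
      = 1 := by
    have := pow_mem hg (orderOf g / q)
    rwa [MonoidHom.mem_ker] at this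
  have hkerv : (h : Matrix (Fin n) (Fin n) ℤ_[p]).map (PadicInt.toZModPow k) = 1 := by
    have := congrArg Units.val hker
    simpa [RingHom.mapMatrix_apply] using this
  set A : Matrix (Fin n) (Fin n) ℤ_[p] := (h : Matrix (Fin n) (Fin n) ℤ_[p]) - 1 with hA
  have hAe : ∀ a b, ‖A a b‖ ≤ (p : ℝ) ^ (-(k : ℤ)) := by
    intro a b
    rw [PadicInt.norm_le_pow_iff_mem_span_pow]
    rw [← PadicInt.ker_toZModPow, RingHom.mem_ker]
    have h1 : PadicInt.toZModPow k ((h : Matrix (Fin n) (Fin n) ℤ_[p]) a b)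
        = (1 : Matrix (Fin n) (Fin n) (ZMod (p ^ k))) a b := by
      rw [← hkerv]; rfl
    rw [hA]
    simp only [Matrix.sub_apply, map_sub, h1]
    rcases eq_or_ne a b with rfl | hab
    · simp [Matrix.one_apply]
    · simp [Matrix.one_apply, hab]
  have hA1 : (A + 1) ^ q = 1 := by
    have hv : (h : Matrix (Fin n) (Fin n) ℤ_[p]) ^ q = 1 := by
      have := congrArg Units.val hhq
      simpa using this
    rw [hA, sub_add_cancel, hv]
  have hA0 : A = 0 := kr_key p n k hk q hq A hAe hA1
  apply hh1
  apply Units.ext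
  have : (h : Matrix (Fin n) (Fin n) ℤ_[p]) - 1 = 0 := hA0
  simpa [sub_eq_zero] using this
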